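/- There is a universal constant C such that for every R > 0, the number of points of (ℕ+1/2)³ (equivalently, of ℕ³ shifted by half-integers, i.e., the set {n/2 : n ∈ ℕ³ with odd coordinates} or simply the half-integer lattice points in the positive octant) contained in the open ball of radius R centered at the origin differs from (4π/3)R³ by at most C·max(1, R²). -/

import Mathlib

open MeasureTheory Metric Set ENNReal

noncomputable section

namespace Stmt8Aux

/-- sum-of-squares ball in plain pi space -/
def Ball' (r : ℝ) : Set (Fin 3 → ℝ) := {x | ∑ j, x j ^ 2 < r ^ 2}

lemma meas_sumsq : Measurable (fun x : Fin 3 → ℝ => ∑ j, x j ^ 2) :=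
  Finset.measurable_sum _ fun j _ => (measurable_pi_apply j).pow_const 2

lemma meas_Ball' (r : ℝ) : MeasurableSet (Ball' r) := meas_sumsq measurableSet_Iio

lemma esnorm_lt_iff (x : EuclideanSpace ℝ (Fin 3)) {r : ℝ} (hr : 0 < r) :
    ‖x‖ < r ↔ ∑ j, x j ^ 2 < r ^ 2 := by
  rw [EuclideanSpace.norm_eq, Real.sqrt_lt' hr]
  simp [Real.norm_eq_abs, sq_abs]

lemma vol_Ball' {r : ℝ} (hr : 0 < r) :
    volume (Ball' r) = ENNReal.ofReal (4 * Real.pi / 3 * r ^ 3) := by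
  have hmp := EuclideanSpace.volume_preserving_symm_measurableEquiv_toLp (Fin 3)
  have hpre : (MeasurableEquiv.toLp 2 (Fin 3 → ℝ)).symm ⁻¹' (Ball' r)
      = Metric.ball (0 : EuclideanSpace ℝ (Fin 3)) r := by
    ext y
    simp only [Set.mem_preimage, mem_ball_zero_iff, Ball', Set.mem_setOf_eq,
      esnorm_lt_iff y hr]
    rfl
  have := hmp.measure_preimage (meas_Ball' r).nullMeasurableSet
  rw [hpre] at this
  rw [← this, EuclideanSpace.volume_ball]
  have hG : Real.Gamma ((Fintype.card (Fin 3) : ℝ) / 2 + 1) = 3 / 4 * Real.sqrt Real.pi := by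
    have h1 : ((Fintype.card (Fin 3) : ℝ)) / 2 + 1 = 3 / 2 + 1 := by norm_num
    rw [h1, Real.Gamma_add_one (by norm_num)]
    have h2 : (3 : ℝ) / 2 = 1 / 2 + 1 := by norm_num
    rw [h2, Real.Gamma_add_one (by norm_num), Real.Gamma_one_half_eq]
    ring
  rw [hG]
  have hcard : Fintype.card (Fin 3) = 3 := by simp
  rw [hcard]
  rw [← ENNReal.ofReal_pow hr.le, ← ENNReal.ofReal_mul (by positivity)]
  congr 1
  have hs : Real.sqrt Real.pi ^ 2 = Real.pi := Real.sq_sqrt Real.pi_pos.le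
  have hsp : Real.sqrt Real.pi > 0 := Real.sqrt_pos.mpr Real.pi_pos
  have h3 : Real.sqrt Real.pi ^ 3 = Real.pi * Real.sqrt Real.pi := by
    rw [pow_succ, hs]
  rw [h3]
  field_simp

/-- strictly positive octant -/
def Opos (r : ℝ) : Set (Fin 3 → ℝ) := {x | ∀ j, 0 < x j} ∩ Ball' r

lemma meas_Opos (r : ℝ) : MeasurableSet (Opos r) := by
  refine MeasurableSet.inter ?_ (meas_sumsq measurableSet_Iio)
  have : {x : Fin 3 → ℝ | ∀ j, 0 < x j} = Set.univ.pi fun _ => Set.Ioi (0:ℝ) := by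
    ext x; simp [Set.mem_pi]
  rw [this]
  exact MeasurableSet.univ_pi fun _ => measurableSet_Ioi

def negIf (s : Fin 3 → Bool) : (Fin 3 → ℝ) → (Fin 3 → ℝ) :=
  fun x j => if s j then x j else -x j

lemma mp_negIf (s : Fin 3 → Bool) : MeasurePreserving (negIf s) := by
  apply volume_preserving_pi (f := fun j (t : ℝ) => if s j then t else -t)
  intro i
  cases h : s i
  · simp only [h, Bool.false_eq_true, if_false]
    exact Measure.measurePreserving_neg _
  · simp only [h, if_true]
    exact MeasurePreserving.id _

def Oc (s : Fin 3 → Bool) (r : ℝ) : Set (Fin 3 → ℝ) := negIf s ⁻¹' Opos r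

lemma vol_Oc (s : Fin 3 → Bool) (r : ℝ) : volume (Oc s r) = volume (Opos r) :=
  (mp_negIf s).measure_preimage (meas_Opos r).nullMeasurableSet

lemma Oc_disjoint (r : ℝ) : Pairwise (Function.onFun Disjoint (fun s => Oc s r)) := by
  intro s t hst
  obtain ⟨j, hj⟩ : ∃ j, s j ≠ t j := by
    by_contra h
    push_neg at h
    exact hst (funext h)
  refine Set.disjoint_left.mpr fun x hxs hxt => ?_
  have h1 := hxs.1 j
  have h2 := hxt.1 j
  simp only [negIf] at h1 h2
  cases hs : s j <;> cases ht : t j <;> rw [hs] at h1 hj <;> rw [ht] at h2 hj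
  · exact hj rfl
  · simp at h1 h2; linarith
  · simp at h1 h2; linarith
  · exact hj rfl

lemma Oc_union (r : ℝ) :
    (⋃ s, Oc s r) = Ball' r ∩ {x | ∀ j, x j ≠ 0} := by
  ext x
  simp only [Set.mem_iUnion, Oc, Set.mem_preimage, Opos, Set.mem_inter_iff, Ball',
    Set.mem_setOf_eq, negIf]
  constructor
  · rintro ⟨s, hpos, hsum⟩
    have hsq : ∀ j, (if s j then x j else -x j) ^ 2 = x j ^ 2 := by
      intro j; split <;> ring
    constructor
    · have heq : ∑ j, (if s j then x j else -x j) ^ 2 = ∑ j, x j ^ 2 :=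
        Finset.sum_congr rfl fun j _ => hsq j
      rw [heq] at hsum; exact hsum
    · intro j
      have := hpos j
      split at this <;> intro h <;> rw [h] at this <;> simp at this
  · rintro ⟨hsum, hne⟩
    refine ⟨fun j => decide (0 < x j), fun j => ?_, ?_⟩
    · by_cases h : 0 < x j
      · simp [h]
      · have : x j < 0 := lt_of_le_of_ne (not_lt.mp h) (hne j)
        simp [h]; linarith
    · have hsq : ∀ j, (if (decide (0 < x j) : Bool) then x j else -x j) ^ 2 = x j ^ 2 := by
        intro j; split <;> ring
      rw [Finset.sum_congr rfl fun j _ => hsq j]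
      exact hsum

lemma vol_hyper (j : Fin 3) : volume {x : Fin 3 → ℝ | x j = 0} = 0 := by
  rw [volume_pi]
  exact Measure.pi_hyperplane _ j 0

lemma eight_vol_Opos (r : ℝ) :
    (8 : ℝ≥0∞) * volume (Opos r) = volume (Ball' r) := by
  have hN : volume (⋃ j, {x : Fin 3 → ℝ | x j = 0}) = 0 :=
    measure_iUnion_null fun j => vol_hyper j
  have hsub : Ball' r ⊆ (⋃ s, Oc s r) ∪ (⋃ j, {x : Fin 3 → ℝ | x j = 0}) := by
    intro x hx
    by_cases h : ∀ j, x j ≠ 0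
    · left; rw [Oc_union]; exact ⟨hx, h⟩
    · right
      push_neg at h
      obtain ⟨j, hj⟩ := h
      exact Set.mem_iUnion.mpr ⟨j, hj⟩
  have h1 : volume (Ball' r) ≤ volume (⋃ s, Oc s r) := by
    calc volume (Ball' r) ≤ volume ((⋃ s, Oc s r) ∪ (⋃ j, {x : Fin 3 → ℝ | x j = 0})) :=
          measure_mono hsub
      _ ≤ volume (⋃ s, Oc s r) + volume (⋃ j, {x : Fin 3 → ℝ | x j = 0}) := measure_union_le _ _
      _ = volume (⋃ s, Oc s r) := by rw [hN, add_zero]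
  have h2 : volume (⋃ s, Oc s r) ≤ volume (Ball' r) := by
    apply measure_mono
    rw [Oc_union]
    exact Set.inter_subset_left
  have hval : volume (⋃ s, Oc s r) = 8 * volume (Opos r) := by
    rw [measure_iUnion (Oc_disjoint r)
      (fun s => (mp_negIf s).measurable (meas_Opos r))]
    rw [tsum_fintype]
    rw [Finset.sum_congr rfl fun s _ => vol_Oc s r, Finset.sum_const, Finset.card_univ]
    have : Fintype.card (Fin 3 → Bool) = 8 := by simp [Fintype.card_fun]
    rw [this]
    simp [nsmul_eq_mul]
  rw [← hval]
  exact le_antisymm h2 h1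

def cube (p : Fin 3 → ℕ) : Set (Fin 3 → ℝ) :=
  Set.univ.pi fun j => Set.Ico ((p j : ℝ) / 2) (((p j : ℝ) + 1) / 2)

lemma meas_cube (p : Fin 3 → ℕ) : MeasurableSet (cube p) :=
  MeasurableSet.univ_pi fun _ => measurableSet_Ico

lemma vol_cube (p : Fin 3 → ℕ) : volume (cube p) = ENNReal.ofReal (1/2) ^ 3 := by
  rw [cube, volume_pi_pi]
  have : ∀ j : Fin 3, volume (Set.Ico ((p j : ℝ) / 2) (((p j : ℝ) + 1) / 2))
      = ENNReal.ofReal (1/2) := by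
    intro j
    rw [Real.volume_Ico]
    congr 1
    ring
  rw [Finset.prod_congr rfl fun j _ => this j, Finset.prod_const, Finset.card_univ,
    Fintype.card_fin]

lemma eight_cube : (8 : ℝ≥0∞) * ENNReal.ofReal (1/2) ^ 3 = 1 := by
  rw [← ENNReal.ofReal_pow (by norm_num)]
  rw [show ((1:ℝ)/2)^3 = 1/8 by norm_num]
  rw [show (8 : ℝ≥0∞) = ENNReal.ofReal 8 by simp]
  rw [← ENNReal.ofReal_mul (by norm_num)]
  norm_num

lemma cube_disjoint : Pairwise (Function.onFun Disjoint cube) := by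
  intro p q hpq
  obtain ⟨j, hj⟩ : ∃ j, p j ≠ q j := by
    by_contra h; push_neg at h; exact hpq (funext h)
  refine Set.disjoint_left.mpr fun x hxp hxq => ?_
  have h1 := hxp j (Set.mem_univ j)
  have h2 := hxq j (Set.mem_univ j)
  simp only [Set.mem_Ico] at h1 h2
  rcases lt_or_gt_of_ne hj with h | h
  · have : (p j : ℝ) + 1 ≤ q j := by exact_mod_cast h
    linarith [h1.2, h2.1]
  · have : (q j : ℝ) + 1 ≤ p j := by exact_mod_cast h
    linarith [h1.1, h2.2]

def S (R : ℝ) : Set (Fin 3 → ℕ) := {p | ∑ j, (((p j : ℝ) + 1) / 2) ^ 2 < R ^ 2}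

lemma S_finite {R : ℝ} (hR0 : 0 < R) : (S R).Finite := by
  have hsub : S R ⊆ Set.univ.pi fun _ : Fin 3 => Set.Iio (⌈2 * R⌉₊) := by
    intro p hp
    intro j _
    simp only [Set.mem_Iio]
    have hterm : (((p j : ℝ) + 1) / 2) ^ 2 < R ^ 2 := by
      refine lt_of_le_of_lt ?_ hp
      exact Finset.single_le_sum (f := fun j => (((p j : ℝ) + 1) / 2) ^ 2)
        (fun i _ => by positivity) (Finset.mem_univ j)
    have hpos : (0:ℝ) < ((p j : ℝ) + 1) / 2 := by positivity
    have hR : ((p j : ℝ) + 1) / 2 < R := by nlinarith [hR0]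
    rw [Nat.lt_ceil]
    linarith
  exact Set.Finite.subset (Set.Finite.pi fun _ => Set.finite_Iio _) hsub

/-- closed octant intersect ball -/
def Ale (r : ℝ) : Set (Fin 3 → ℝ) := {x | ∀ j, 0 ≤ x j} ∩ Ball' r

lemma cube_sub_Ale {R : ℝ} {p : Fin 3 → ℕ} (hp : p ∈ S R) : cube p ⊆ Ale R := by
  intro x hx
  have hmem : ∀ j, (p j : ℝ) / 2 ≤ x j ∧ x j < ((p j : ℝ) + 1) / 2 := by
    intro j
    have := hx j (Set.mem_univ j)
    simpa [Set.mem_Ico] using this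
  constructor
  · intro j
    exact le_trans (by positivity) (hmem j).1
  · have hle : ∑ j, x j ^ 2 ≤ ∑ j, (((p j : ℝ) + 1) / 2) ^ 2 := by
      refine Finset.sum_le_sum fun j _ => ?_
      have h0 : 0 ≤ x j := le_trans (by positivity) (hmem j).1
      exact pow_le_pow_left₀ h0 (hmem j).2.le 2
    exact lt_of_le_of_lt hle hp

lemma vol_Ale (r : ℝ) : volume (Ale r) = volume (Opos r) := by
  have hN : volume (⋃ j, {x : Fin 3 → ℝ | x j = 0}) = 0 :=
    measure_iUnion_null fun j => vol_hyper j
  have hsub : Ale r ⊆ Opos r ∪ (⋃ j, {x : Fin 3 → ℝ | x j = 0}) := by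
    rintro x ⟨hge, hball⟩
    by_cases h : ∀ j, 0 < x j
    · left; exact ⟨h, hball⟩
    · right
      push_neg at h
      obtain ⟨j, hj⟩ := h
      exact Set.mem_iUnion.mpr ⟨j, le_antisymm hj (hge j)⟩
  refine le_antisymm ?_ (measure_mono fun x hx => ⟨fun j => (hx.1 j).le, hx.2⟩)
  calc volume (Ale r) ≤ volume (Opos r ∪ ⋃ j, {x : Fin 3 → ℝ | x j = 0}) := measure_mono hsub
    _ ≤ volume (Opos r) + volume (⋃ j, {x : Fin 3 → ℝ | x j = 0}) := measure_union_le _ _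
    _ = volume (Opos r) := by rw [hN, add_zero]

lemma Opos_sub_cubes {R : ℝ} (hR : Real.sqrt 3 / 2 < R) (hfin : (S R).Finite) :
    Opos (R - Real.sqrt 3 / 2) ⊆ ⋃ p ∈ hfin.toFinset, cube p := by
  rintro x ⟨hpos, hball⟩
  have hx : ∀ j, 0 < x j := hpos
  set p : Fin 3 → ℕ := fun j => ⌊2 * x j⌋₊ with hpdef
  have hlo : ∀ j, (p j : ℝ) / 2 ≤ x j := by
    intro j
    have h := Nat.floor_le (a := 2 * x j) (by linarith [hx j])
    simp only [hpdef]
    linarith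
  have hhi : ∀ j, x j < ((p j : ℝ) + 1) / 2 := by
    intro j
    have h := Nat.lt_floor_add_one (2 * x j)
    simp only [hpdef]
    linarith
  have hsum : ∑ j, (((p j : ℝ) + 1) / 2) ^ 2 < R ^ 2 := by
    set a := Real.sqrt 3 / 2 with ha
    have ha2 : Real.sqrt 3 ^ 2 = 3 := Real.sq_sqrt (by norm_num)
    have ha0 : 0 < Real.sqrt 3 := Real.sqrt_pos.mpr (by norm_num)
    have hball' : ∑ j, x j ^ 2 < (R - a) ^ 2 := hball
    have hterm : ∀ j, (((p j : ℝ) + 1) / 2) ^ 2 ≤ (x j + 1/2) ^ 2 := by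
      intro j
      have h1 : ((p j : ℝ) + 1) / 2 ≤ x j + 1/2 := by
        have h := Nat.floor_le (a := 2 * x j) (by linarith [hx j])
        simp only [hpdef]
        linarith
      have h0 : (0:ℝ) ≤ ((p j : ℝ) + 1) / 2 := by positivity
      exact pow_le_pow_left₀ h0 h1 2
    have hle : ∑ j, (((p j : ℝ) + 1) / 2) ^ 2 ≤ ∑ j, (x j + 1/2) ^ 2 :=
      Finset.sum_le_sum fun j _ => hterm j
    refine lt_of_le_of_lt hle ?_
    rw [Fin.sum_univ_three] at hball' ⊢
    have h0 := hx 0; have h1 := hx 1; have h2 := hx 2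
    have hRa : 0 < R - a := by linarith
    have hcs : (x 0 + x 1 + x 2) ^ 2 ≤ 3 * (x 0 ^ 2 + x 1 ^ 2 + x 2 ^ 2) := by
      nlinarith [sq_nonneg (x 0 - x 1), sq_nonneg (x 0 - x 2), sq_nonneg (x 1 - x 2)]
    have hsum2 : (x 0 + x 1 + x 2) ^ 2 < (Real.sqrt 3 * (R - a)) ^ 2 := by
      have : (Real.sqrt 3 * (R - a)) ^ 2 = 3 * (R - a) ^ 2 := by
        rw [mul_pow, ha2]
      rw [this]
      nlinarith [hcs, hball']
    have hsum3 : x 0 + x 1 + x 2 < Real.sqrt 3 * (R - a) := by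
      have hnn : (0:ℝ) ≤ Real.sqrt 3 * (R - a) := by positivity
      nlinarith [hsum2, h0, h1, h2]
    nlinarith [hball', hsum3, ha2]
  have hmem : p ∈ hfin.toFinset := by
    rw [Set.Finite.mem_toFinset]
    exact hsum
  exact Set.mem_biUnion hmem (fun j _ => Set.mem_Ico.mpr ⟨hlo j, hhi j⟩)

lemma count_bounds {R : ℝ} (hR0 : 0 < R) :
    ((S_finite hR0).toFinset.card : ℝ≥0∞) ≤ ENNReal.ofReal (4 * Real.pi / 3 * R ^ 3) ∧
    (Real.sqrt 3 / 2 < R →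
      ENNReal.ofReal (4 * Real.pi / 3 * (R - Real.sqrt 3 / 2) ^ 3)
        ≤ ((S_finite hR0).toFinset.card : ℝ≥0∞)) := by
  set F := (S_finite hR0).toFinset with hF
  have hU : volume (⋃ p ∈ F, cube p) = (F.card : ℝ≥0∞) * ENNReal.ofReal (1/2) ^ 3 := by
    rw [measure_biUnion_finset (fun p _ q _ hpq => cube_disjoint hpq)
      (fun p _ => meas_cube p)]
    rw [Finset.sum_congr rfl fun p _ => vol_cube p, Finset.sum_const, nsmul_eq_mul]
  have h8U : (8 : ℝ≥0∞) * volume (⋃ p ∈ F, cube p) = (F.card : ℝ≥0∞) := by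
    rw [hU, ← mul_assoc, mul_comm (8 : ℝ≥0∞) (F.card : ℝ≥0∞), mul_assoc, eight_cube, mul_one]
  constructor
  · have hsub : (⋃ p ∈ F, cube p) ⊆ Ale R := by
      refine Set.iUnion₂_subset fun p hp => cube_sub_Ale ?_
      rw [hF, Set.Finite.mem_toFinset] at hp
      exact hp
    calc (F.card : ℝ≥0∞) = 8 * volume (⋃ p ∈ F, cube p) := h8U.symm
      _ ≤ 8 * volume (Ale R) := mul_le_mul_right (measure_mono hsub) 8
      _ = 8 * volume (Opos R) := by rw [vol_Ale]
      _ = volume (Ball' R) := eight_vol_Opos R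
      _ = ENNReal.ofReal (4 * Real.pi / 3 * R ^ 3) := vol_Ball' hR0
  · intro hR
    have hRa : 0 < R - Real.sqrt 3 / 2 := by linarith
    calc ENNReal.ofReal (4 * Real.pi / 3 * (R - Real.sqrt 3 / 2) ^ 3)
        = volume (Ball' (R - Real.sqrt 3 / 2)) := (vol_Ball' hRa).symm
      _ = 8 * volume (Opos (R - Real.sqrt 3 / 2)) := (eight_vol_Opos _).symm
      _ ≤ 8 * volume (⋃ p ∈ F, cube p) :=
          mul_le_mul_right (measure_mono (Opos_sub_cubes hR (S_finite hR0))) 8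
      _ = (F.card : ℝ≥0∞) := h8U

end Stmt8Aux

end

/-- There is a universal constant `C` such that for every `R > 0`, the number of half-integer
lattice points in the positive octant (points `(n+1)/2`, `n ∈ ℕ³`) inside the open ball of
radius `R` differs from `(4π/3)R³` by at most `C·max(1, R²)`. -/
theorem stmt8 : ∃ C > (0 : ℝ), ∀ R : ℝ, 0 < R →
    |(Nat.card {p : Fin 3 → ℕ // ∑ j, (((p j : ℝ) + 1) / 2) ^ 2 < R ^ 2} : ℝ) -
        (4 * Real.pi / 3) * R ^ 3| ≤ C * max 1 (R ^ 2) := by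
  refine ⟨100, by norm_num, fun R hR0 => ?_⟩
  have hπ4 : Real.pi ≤ 4 := Real.pi_le_four
  have hπ0 : 0 < Real.pi := Real.pi_pos
  have ha2 : Real.sqrt 3 ^ 2 = 3 := Real.sq_sqrt (by norm_num)
  have ha0 : 0 < Real.sqrt 3 := Real.sqrt_pos.mpr (by norm_num)
  have ha1 : Real.sqrt 3 ≤ 2 := by nlinarith
  have hm1 : (1:ℝ) ≤ max 1 (R ^ 2) := le_max_left _ _
  have hm2 : R ^ 2 ≤ max 1 (R ^ 2) := le_max_right _ _
  have hcard : (Nat.card {p : Fin 3 → ℕ // ∑ j, (((p j : ℝ) + 1) / 2) ^ 2 < R ^ 2} : ℕ)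
      = (Stmt8Aux.S_finite hR0).toFinset.card := by
    rw [show {p : Fin 3 → ℕ // ∑ j, (((p j : ℝ) + 1) / 2) ^ 2 < R ^ 2}
      = ↥(Stmt8Aux.S R) from rfl]
    rw [Nat.card_coe_set_eq, Set.ncard_eq_toFinset_card (Stmt8Aux.S R)
      (Stmt8Aux.S_finite hR0)]
  set N := (Stmt8Aux.S_finite hR0).toFinset.card with hN
  clear_value N
  rw [hcard]
  obtain ⟨hub, hlb⟩ := Stmt8Aux.count_bounds hR0
  rw [← hN] at hub hlb
  have hubR : (N : ℝ) ≤ 4 * Real.pi / 3 * R ^ 3 := by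
    have := ENNReal.toReal_mono (by simp) hub
    rw [ENNReal.toReal_natCast, ENNReal.toReal_ofReal (by positivity)] at this
    exact this
  by_cases hcase : Real.sqrt 3 / 2 < R
  · have hRa : (0:ℝ) < R - Real.sqrt 3 / 2 := by linarith
    have hlbR : 4 * Real.pi / 3 * (R - Real.sqrt 3 / 2) ^ 3 ≤ (N : ℝ) := by
      have := ENNReal.toReal_mono (by simp : ((N : ℝ≥0∞) ≠ ⊤)) (hlb hcase)
      rw [ENNReal.toReal_natCast, ENNReal.toReal_ofReal
        (mul_nonneg (by positivity) (pow_nonneg hRa.le 3))] at this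
      exact this
    have hdiff0 : (R - Real.sqrt 3 / 2) ^ 3 ≤ R ^ 3 :=
      pow_le_pow_left₀ hRa.le (by linarith) 3
    have hdiff : R ^ 3 - (R - Real.sqrt 3 / 2) ^ 3 ≤ 3 * R ^ 2 + 1 := by
      nlinarith [ha2, ha1, ha0, hR0, sq_nonneg R]
    have h1 : 4 * Real.pi / 3 * R ^ 3 - (N:ℝ)
        ≤ 4 * Real.pi / 3 * (R ^ 3 - (R - Real.sqrt 3 / 2) ^ 3) := by
      nlinarith [hlbR]
    have h2 : 4 * Real.pi / 3 * (R ^ 3 - (R - Real.sqrt 3 / 2) ^ 3) ≤ 6 * (3 * R ^ 2 + 1) := by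
      nlinarith [hdiff, hdiff0, hπ4, hπ0,
        mul_nonneg (by linarith : (0:ℝ) ≤ 6 - 4 * Real.pi / 3)
          (by linarith [hdiff0] : (0:ℝ) ≤ R ^ 3 - (R - Real.sqrt 3 / 2) ^ 3)]
    rw [abs_of_nonpos (by linarith [hubR])]
    linarith [h1, h2, hm1, hm2]
  · push_neg at hcase
    have hNz : N = 0 := by
      rw [hN, Finset.card_eq_zero, Set.Finite.toFinset_eq_empty]
      ext p
      simp only [Stmt8Aux.S, Set.mem_setOf_eq, Set.mem_empty_iff_false, iff_false, not_lt]
      have hterm : ∀ j : Fin 3, (1:ℝ)/4 ≤ (((p j : ℝ) + 1) / 2) ^ 2 := by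
        intro j
        have : (1:ℝ)/2 ≤ ((p j : ℝ) + 1) / 2 := by
          have : (0:ℝ) ≤ (p j : ℝ) := Nat.cast_nonneg _
          linarith
        nlinarith
      have hsum : (3:ℝ)/4 ≤ ∑ j, (((p j : ℝ) + 1) / 2) ^ 2 := by
        rw [Fin.sum_univ_three]
        linarith [hterm 0, hterm 1, hterm 2]
      have hR2 : R ^ 2 ≤ 3/4 := by nlinarith
      linarith
    rw [hNz]
    simp only [Nat.cast_zero, zero_sub, abs_neg]
    rw [abs_of_nonneg (by positivity)]
    have hR1 : R ≤ 1 := by linarith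
    have hR3 : R ^ 3 ≤ R ^ 2 := by nlinarith [mul_le_mul_of_nonneg_right hR1 (sq_nonneg R)]
    have h46 : 4 * Real.pi / 3 ≤ 6 := by linarith
    have h6 : 4 * Real.pi / 3 * R ^ 3 ≤ 6 * R ^ 2 :=
      mul_le_mul h46 hR3 (pow_nonneg hR0.le 3) (by norm_num)
    linarith [hm2, hm1]
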